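/- arXiv:2306.16360 — 4 statements merged into one kernel-verified Lean document; each statement's English description precedes it below -/
import Mathlib

section
/- (TEBD error bound.) Let H be a Hermitian n×n complex matrix, let E_1,…,E_d be linear maps on n×n complex matrices mapping density matrices to density matrices, and let Π_1,…,Π_{d−1} be linear maps on n×n complex matrices mapping Hermitian matrices to Hermitian matrices. Let ρ_0 be a density matrix and ρ_t = E_t(ρ_{t−1}). Define A_d = H and A_t = Π_t(E_{t+1}†(A_{t+1})) for t = d−1,…,1, set H_t = A_t − E_{t+1}†(A_{t+1}), E = Tr(H ρ_d), and E_TEBD = Tr(E_1(ρ_0) · A_1). Then |E − E_TEBD| ≤ Σ_{t=1}^{d−1} ‖H_t‖_F. -/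
open Matrix
open scoped ComplexOrder

/-- The Frobenius norm `‖A‖_F = √(Tr(AᴴA))` of a complex matrix. -/
noncomputable def frobNorm {m : Type*} [Fintype m] (A : Matrix m m ℂ) : ℝ :=
  Real.sqrt (((Aᴴ * A).trace).re)


lemma cs_abs {ι : Type*} (s : Finset ι) (x y : ι → ℂ) :
    ‖∑ i ∈ s, x i * y i‖ ≤
      Real.sqrt (∑ i ∈ s, ‖x i‖^2) * Real.sqrt (∑ i ∈ s, ‖y i‖^2) := by
  calc ‖∑ i ∈ s, x i * y i‖ ≤ ∑ i ∈ s, ‖x i‖ * ‖y i‖ := by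
        refine (norm_sum_le _ _).trans ?_
        simp [_root_.map_mul, le_refl]
    _ ≤ _ := by
        have h := Finset.sum_mul_sq_le_sq_mul_sq s (fun i => ‖x i‖) (fun i => ‖y i‖)
        have h0 : (0:ℝ) ≤ ∑ i ∈ s, ‖x i‖ * ‖y i‖ :=
          Finset.sum_nonneg fun i _ => mul_nonneg (norm_nonneg _) (norm_nonneg _)
        rw [← Real.sqrt_mul_self h0, ← Real.sqrt_mul (Finset.sum_nonneg fun i _ => sq_nonneg _)]
        rw [← sq]
        exact Real.sqrt_le_sqrt h

lemma frob_sq {m : Type*} [Fintype m] (A : Matrix m m ℂ) [DecidableEq m] :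
    ((Aᴴ * A).trace).re = ∑ i, ∑ j, ‖A i j‖^2 := by
  simp only [trace, diag, mul_apply, conjTranspose_apply]
  rw [Complex.re_sum]
  rw [Finset.sum_comm]
  congr 1; ext i; rw [Complex.re_sum]; congr 1; ext j
  rw [Complex.sq_norm]
  change ((starRingEnd ℂ) (A j i) * A j i).re = _
  rw [← Complex.normSq_eq_conj_mul_self]
  simp

lemma psd_entry_sq {m : Type*} [Fintype m] [DecidableEq m] {ρ : Matrix m m ℂ}
    (hρ : ρ.PosSemidef) (i j : m) :
    ‖ρ i j‖ ^ 2 ≤ (ρ i i).re * (ρ j j).re := by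
  open scoped MatrixOrder in
  obtain ⟨B, hB⟩ := CStarAlgebra.nonneg_iff_eq_star_mul_self.mp hρ.nonneg
  rw [star_eq_conjTranspose] at hB; subst hB
  have hij : (Bᴴ * B) i j = ∑ k, (starRingEnd ℂ) (B k i) * B k j := by
    simp [Matrix.mul_apply, Matrix.conjTranspose_apply]
  have hdiag : ∀ l, ((Bᴴ * B) l l).re = ∑ k, ‖B k l‖ ^ 2 := by
    intro l
    rw [hij] at *
    simp only [Matrix.mul_apply, Matrix.conjTranspose_apply]
    rw [Complex.re_sum]
    congr 1; ext k
    change ((starRingEnd ℂ) (B k l) * B k l).re = _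
    rw [← Complex.normSq_eq_conj_mul_self, Complex.sq_norm]; simp
  rw [hij, hdiag, hdiag]
  have h' : ‖∑ k, (starRingEnd ℂ) (B k i) * B k j‖ ≤
      Real.sqrt (∑ k, ‖B k i‖ ^ 2) * Real.sqrt (∑ k, ‖B k j‖ ^ 2) := by
    have h := cs_abs Finset.univ (fun k => (starRingEnd ℂ) (B k i)) (fun k => B k j)
    convert h using 4 with k
    simp
  have h2 := pow_le_pow_left₀ (norm_nonneg _) h' 2
  rw [mul_pow, Real.sq_sqrt (Finset.sum_nonneg fun _ _ => sq_nonneg _),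
    Real.sq_sqrt (Finset.sum_nonneg fun _ _ => sq_nonneg _)] at h2
  exact h2

lemma psd_sum_sq_le_one {m : Type*} [Fintype m] [DecidableEq m] {ρ : Matrix m m ℂ}
    (hρ : ρ.PosSemidef) (htr : ρ.trace = 1) :
    ∑ i, ∑ j, ‖ρ i j‖ ^ 2 ≤ 1 := by
  have h1 : ∑ i, ∑ j, ‖ρ i j‖ ^ 2 ≤ ∑ i, ∑ j, (ρ i i).re * (ρ j j).re :=
    Finset.sum_le_sum fun i _ => Finset.sum_le_sum fun j _ => psd_entry_sq hρ i j
  have h2 : ∑ i, ∑ j, (ρ i i).re * (ρ j j).re = (∑ i, (ρ i i).re) * (∑ j, (ρ j j).re) := by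
    rw [Finset.sum_mul_sum]
  have h3 : ∑ i, (ρ i i).re = 1 := by
    have : (ρ.trace).re = 1 := by rw [htr]; simp
    rw [← this, Matrix.trace, Complex.re_sum]; rfl
  rw [h2, h3, mul_one] at h1
  exact h1

lemma trace_mul_density_le {m : Type*} [Fintype m] [DecidableEq m]
    (M : Matrix m m ℂ) {ρ : Matrix m m ℂ}
    (hρ : ρ.PosSemidef) (htr : ρ.trace = 1) :
    ‖(M * ρ).trace‖ ≤ frobNorm M := by
  have hT : (M * ρ).trace = ∑ p ∈ (Finset.univ : Finset (m × m)),
      M p.1 p.2 * ρ p.2 p.1 := by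
    rw [Matrix.trace]
    simp only [Matrix.diag, Matrix.mul_apply]
    rw [← Finset.sum_product']
    rfl
  rw [hT]
  have h := cs_abs Finset.univ (fun p : m × m => M p.1 p.2) (fun p : m × m => ρ p.2 p.1)
  refine h.trans ?_
  have e1 : ∑ p ∈ (Finset.univ : Finset (m × m)), ‖M p.1 p.2‖ ^ 2
      = ∑ i, ∑ j, ‖M i j‖ ^ 2 := by rw [← Finset.sum_product']; rfl
  have e2 : ∑ p ∈ (Finset.univ : Finset (m × m)), ‖ρ p.2 p.1‖ ^ 2
      = ∑ i, ∑ j, ‖ρ i j‖ ^ 2 := by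
    rw [← Finset.sum_product']
    exact Finset.sum_nbij' Prod.swap Prod.swap (by simp) (by simp) (by simp) (by simp) (by simp)
  rw [e1, e2, frobNorm, frob_sq]
  have hle : Real.sqrt (∑ i, ∑ j, ‖ρ i j‖ ^ 2) ≤ 1 := by
    rw [show (1:ℝ) = Real.sqrt 1 by simp]
    exact Real.sqrt_le_sqrt (psd_sum_sq_le_one hρ htr)
  calc Real.sqrt (∑ i, ∑ j, ‖M i j‖ ^ 2) * Real.sqrt (∑ i, ∑ j, ‖ρ i j‖ ^ 2)
      ≤ Real.sqrt (∑ i, ∑ j, ‖M i j‖ ^ 2) * 1 :=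
        mul_le_mul_of_nonneg_left hle (Real.sqrt_nonneg _)
    _ = _ := by rw [mul_one]

/-- **TEBD error bound.** With channels `E_t` mapping density matrices to
density matrices, compression maps `Π_t` mapping Hermitian matrices to Hermitian
matrices, compressed Heisenberg-picture operators `A_d = H`,
`A_t = Π_t(E_{t+1}†(A_{t+1}))`, `H_t = A_t - E_{t+1}†(A_{t+1})`, true energy
`E = Tr(H ρ_d)` and TEBD estimate `E_TEBD = Tr(E₁(ρ₀)·A₁)`, one has
`|E - E_TEBD| ≤ ∑_{t=1}^{d-1} ‖H_t‖_F`. -/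
theorem tebd_error_bound
    (n d : ℕ) (hd : 1 ≤ d)
    (H : Matrix (Fin n) (Fin n) ℂ) (hH : H.IsHermitian)
    (E Estar Pi : ℕ → Matrix (Fin n) (Fin n) ℂ →ₗ[ℂ] Matrix (Fin n) (Fin n) ℂ)
    (hadj : ∀ t (A B : Matrix (Fin n) (Fin n) ℂ),
      (A * E t B).trace = (Estar t A * B).trace)
    (hE : ∀ t, 1 ≤ t → t ≤ d → ∀ M : Matrix (Fin n) (Fin n) ℂ,
      M.PosSemidef → M.trace = 1 → (E t M).PosSemidef ∧ (E t M).trace = 1)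
    (hPi : ∀ t, 1 ≤ t → t < d → ∀ M : Matrix (Fin n) (Fin n) ℂ,
      M.IsHermitian → (Pi t M).IsHermitian)
    (ρ : ℕ → Matrix (Fin n) (Fin n) ℂ)
    (hpsd : (ρ 0).PosSemidef) (htr : (ρ 0).trace = 1)
    (hstep : ∀ t, 1 ≤ t → t ≤ d → ρ t = E t (ρ (t - 1)))
    (A : ℕ → Matrix (Fin n) (Fin n) ℂ)
    (hAd : A d = H)
    (hAt : ∀ t, 1 ≤ t → t < d → A t = Pi t (Estar (t + 1) (A (t + 1))))
    (HH : ℕ → Matrix (Fin n) (Fin n) ℂ)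
    (hHH : ∀ t, 1 ≤ t → t < d → HH t = A t - Estar (t + 1) (A (t + 1))) :
    ‖(H * ρ d).trace - (E 1 (ρ 0) * A 1).trace‖
      ≤ ∑ t ∈ Finset.Icc 1 (d - 1), frobNorm (HH t) := by
    -- density matrices along the trajectory
  have hdens : ∀ t, t ≤ d → (ρ t).PosSemidef ∧ (ρ t).trace = 1 := by
    intro t
    induction t with
    | zero => exact fun _ => ⟨hpsd, htr⟩
    | succ k ih =>
      intro hk
      have hk' : k ≤ d := le_of_lt (Nat.lt_of_lt_of_le (Nat.lt_succ_self k) hk)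
      obtain ⟨h1, h2⟩ := ih hk'
      have := hE (k+1) (Nat.succ_le_succ (Nat.zero_le k)) hk (ρ k) h1 h2
      rw [hstep (k+1) (Nat.succ_le_succ (Nat.zero_le k)) hk, Nat.add_sub_cancel]
      exact this
  set g : ℕ → ℂ := fun t => (A t * ρ t).trace with hg
  have hE1 : (E 1 (ρ 0) * A 1).trace = g 1 := by
    rw [Matrix.trace_mul_comm, hg]
    have h1 := hstep 1 le_rfl hd
    simp only [Nat.sub_self] at h1
    simp only [hg]
    rw [← h1]
  have hEd : (H * ρ d).trace = g d := by rw [← hAd]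
  have hterm : ∀ i, i < d - 1 → g (i+2) - g (i+1) = -((HH (i+1) * ρ (i+1)).trace) := by
    intro i hi
    have ht1 : 1 ≤ i + 1 := Nat.succ_le_succ (Nat.zero_le i)
    have ht2 : i + 1 < d := Nat.lt_of_le_of_lt (Nat.succ_le_of_lt hi) (Nat.sub_lt hd one_pos)
    have hstep' : ρ (i+2) = E (i+2) (ρ (i+1)) := by
      have := hstep (i+2) (by omega) (by omega)
      simpa using this
    have : g (i+2) = (Estar (i+2) (A (i+2)) * ρ (i+1)).trace := by
      rw [hg]
      simp only
      rw [hstep', hadj]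
    rw [this, hg]
    simp only
    rw [hHH (i+1) ht1 ht2]
    rw [Matrix.sub_mul, Matrix.trace_sub]
    have e2 : i + 1 + 1 = i + 2 := by omega
    rw [e2]
    ring
  have htele : g d - g 1 = ∑ i ∈ Finset.range (d-1), (g (i+2) - g (i+1)) := by
    rw [Finset.sum_range_sub (fun i => g (i+1))]
    congr 2
    omega
  rw [hEd, hE1, htele]
  calc ‖∑ i ∈ Finset.range (d-1), (g (i+2) - g (i+1))‖
      ≤ ∑ i ∈ Finset.range (d-1), ‖g (i+2) - g (i+1)‖ :=
        norm_sum_le _ _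
    _ ≤ ∑ i ∈ Finset.range (d-1), frobNorm (HH (i+1)) := by
        refine Finset.sum_le_sum fun i hi => ?_
        have hi' := Finset.mem_range.mp hi
        rw [hterm i hi', norm_neg]
        have hle : i + 1 ≤ d := by omega
        obtain ⟨h1, h2⟩ := hdens (i+1) hle
        exact trace_mul_density_le _ h1 h2
    _ = ∑ t ∈ Finset.Icc 1 (d - 1), frobNorm (HH t) := by
        rw [← Finset.Ico_add_one_right_eq_Icc, Finset.sum_Ico_eq_sum_range]
        have : d - 1 + 1 - 1 = d - 1 := by omega
        rw [this]
        exact Finset.sum_congr rfl fun i _ => by rw [Nat.add_comm]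
end

section
/- (Frobenius contraction of unital primitive qubit noise on traceless matrices.) Let U and V be 2×2 unitary matrices and let p_X, p_Y, p_Z ∈ (0,1) with p = p_X + p_Y + p_Z < 1. Define the single-qubit channel N(M) = (1−p)M + V(Σ_{P∈{X,Y,Z}} p_P · P U M U† P)V†, where X, Y, Z are the Pauli matrices. Then for every 2×2 complex matrix M with Tr(M) = 0, one has ‖N(M)‖_F ≤ (1 − min(p_X, p_Y, p_Z)) · ‖M‖_F. -/
open Matrix

/-- Pauli `X` matrix. -/
def pauliX : Matrix (Fin 2) (Fin 2) ℂ := !![0, 1; 1, 0]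

/-- Pauli `Y` matrix. -/
def pauliY : Matrix (Fin 2) (Fin 2) ℂ := !![0, -Complex.I; Complex.I, 0]

/-- Pauli `Z` matrix. -/
def pauliZ : Matrix (Fin 2) (Fin 2) ℂ := !![1, 0; 0, -1]

/-- The unital primitive single-qubit noise channel
`N(M) = (1-p)M + V(∑_{P ∈ {X,Y,Z}} p_P · P U M U† P)V†`, where `p = p_X + p_Y + p_Z`. -/
noncomputable def chanN (U V : Matrix (Fin 2) (Fin 2) ℂ) (pX pY pZ : ℝ)
    (M : Matrix (Fin 2) (Fin 2) ℂ) : Matrix (Fin 2) (Fin 2) ℂ :=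
  (1 - ((pX : ℂ) + pY + pZ)) • M
    + V * ((pX : ℂ) • (pauliX * (U * M * Uᴴ) * pauliX)
         + (pY : ℂ) • (pauliY * (U * M * Uᴴ) * pauliY)
         + (pZ : ℂ) • (pauliZ * (U * M * Uᴴ) * pauliZ)) * Vᴴ

lemma frob_sq_s12 (A : Matrix (Fin 2) (Fin 2) ℂ) : ((Aᴴ*A).trace).re
    = Complex.normSq (A 0 0) + Complex.normSq (A 0 1) + Complex.normSq (A 1 0) + Complex.normSq (A 1 1) := by
  simp [Matrix.trace_fin_two, Matrix.mul_apply, Fin.sum_univ_two, Matrix.conjTranspose_apply,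
    Complex.normSq_apply, Complex.mul_re, Complex.add_re]
  ring

section Aux

attribute [local instance] Matrix.frobeniusSeminormedAddCommGroup Matrix.frobeniusNormSMulClass

lemma frob_eq_norm (A : Matrix (Fin 2) (Fin 2) ℂ) : frobNorm A = ‖A‖ := by
  rw [Matrix.frobenius_norm_def, frobNorm, frob_sq_s12, ← Real.sqrt_eq_rpow]
  congr 1
  rw [Fin.sum_univ_two, Fin.sum_univ_two, Fin.sum_univ_two]
  simp [Complex.normSq_eq_norm_sq, Real.rpow_natCast]
  ring

lemma frob_add_le (A B : Matrix (Fin 2) (Fin 2) ℂ) :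
    frobNorm (A + B) ≤ frobNorm A + frobNorm B := by
  simp only [frob_eq_norm]; exact norm_add_le _ _

lemma frob_smul (c : ℂ) (A : Matrix (Fin 2) (Fin 2) ℂ) :
    frobNorm (c • A) = ‖c‖ * frobNorm A := by
  simp only [frob_eq_norm]
  rw [norm_smul]

end Aux

lemma frob_conj {W : Matrix (Fin 2) (Fin 2) ℂ} (hW : W ∈ Matrix.unitaryGroup (Fin 2) ℂ)
    (A : Matrix (Fin 2) (Fin 2) ℂ) : frobNorm (W * A * Wᴴ) = frobNorm A := by
  have h1 : Wᴴ * W = 1 := mem_unitaryGroup_iff'.mp hW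
  unfold frobNorm
  congr 2
  have h3 : (W * A * Wᴴ)ᴴ * (W * A * Wᴴ) = W * (Aᴴ * A) * Wᴴ := by
    simp only [conjTranspose_mul, conjTranspose_conjTranspose, Matrix.mul_assoc]
    rw [← Matrix.mul_assoc Wᴴ W, h1, Matrix.one_mul]
  rw [h3, Matrix.trace_mul_cycle, ← Matrix.mul_assoc, h1, Matrix.one_mul]


lemma pauli_sum_eq (pX pY pZ : ℝ) (α β γ : ℂ) :
    (pX : ℂ) • (pauliX * !![α,β;γ,-α] * pauliX)
      + (pY : ℂ) • (pauliY * !![α,β;γ,-α] * pauliY)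
      + (pZ : ℂ) • (pauliZ * !![α,β;γ,-α] * pauliZ)
    = !![α*((pZ:ℂ)-pX-pY), γ*((pX:ℂ)-pY) - β*pZ;
         β*((pX:ℂ)-pY) - γ*pZ, -(α*((pZ:ℂ)-pX-pY))] := by
  ext i j
  fin_cases i <;> fin_cases j <;>
    simp [pauliX, pauliY, pauliZ, Matrix.mul_apply, Fin.sum_univ_two] <;>
    ring_nf <;> simp [Complex.I_sq] <;> ring


lemma real_ineq (q t z a b g d : ℝ) (hq0 : 0 ≤ q) (ht0 : 0 ≤ t) (hz : 0 ≤ z)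
    (hT : t + z ≤ q) (hD : |d| ≤ q) (hb : 0 ≤ b) (hg : 0 ≤ g) :
    2*a^2*d^2 + (g*t + b*z)^2 + (b*t + g*z)^2 ≤ q^2 * (2*a^2 + b^2 + g^2) := by
  have hDs : d^2 ≤ q^2 := by
    have h := abs_le.mp hD
    nlinarith [h.1, h.2]
  have h2 : (g*t + b*z)^2 + (b*t + g*z)^2 ≤ (t+z)^2 * (b^2+g^2) := by
    nlinarith [mul_nonneg (mul_nonneg ht0 hz) (sq_nonneg (b-g))]
  have h3 : (t+z)^2 ≤ q^2 := by nlinarith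
  nlinarith [sq_nonneg a, mul_le_mul_of_nonneg_left hDs (sq_nonneg a),
    mul_le_mul_of_nonneg_right h3 (add_nonneg (sq_nonneg b) (sq_nonneg g))]

lemma key_bound (pX pY pZ : ℝ) (hpX : 0 < pX) (hpY : 0 < pY) (hpZ : 0 < pZ) (α β γ : ℂ) :
    frobNorm ((pX : ℂ) • (pauliX * !![α,β;γ,-α] * pauliX)
      + (pY : ℂ) • (pauliY * !![α,β;γ,-α] * pauliY)
      + (pZ : ℂ) • (pauliZ * !![α,β;γ,-α] * pauliZ))
    ≤ (pX + pY + pZ - min pX (min pY pZ)) * frobNorm !![α,β;γ,-α] := by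
  set m := min pX (min pY pZ) with hm
  have hmX : m ≤ pX := min_le_left _ _
  have hmY : m ≤ pY := le_trans (min_le_right _ _) (min_le_left _ _)
  have hmZ : m ≤ pZ := le_trans (min_le_right _ _) (min_le_right _ _)
  have hm0 : 0 < m := lt_min hpX (lt_min hpY hpZ)
  set q := pX + pY + pZ - m with hq
  have hq0 : 0 ≤ q := by simp only [hq]; linarith
  rw [pauli_sum_eq]
  set a := ‖α‖
  set b := ‖β‖
  set g := ‖γ‖
  set t := |pX - pY| with ht
  have ht0 : 0 ≤ t := abs_nonneg _
  have hT : t + pZ ≤ q := by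
    have : |pX - pY| ≤ q - pZ := by
      rw [abs_le]; constructor <;> simp only [hq] <;> linarith
    linarith
  have hD : |pZ - pX - pY| ≤ q := by
    rw [abs_le]; constructor <;> simp only [hq] <;> linarith
  -- entrywise normSq computations
  have e00 : Complex.normSq (α*((pZ:ℂ)-pX-pY)) = a^2 * (pZ-pX-pY)^2 := by
    rw [show ((pZ:ℂ)-pX-pY) = (((pZ-pX-pY : ℝ)):ℂ) by push_cast; ring, _root_.map_mul,
      Complex.normSq_ofReal, Complex.normSq_eq_norm_sq]
    ring
  have habs01 : ‖γ*((pX:ℂ)-pY) - β*(pZ:ℂ)‖ ≤ g * t + b * pZ := by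
    calc ‖γ*((pX:ℂ)-pY) - β*(pZ:ℂ)‖
        ≤ ‖γ*((pX:ℂ)-pY)‖ + ‖β*(pZ:ℂ)‖ := by
          simpa using norm_sub_le (γ*((pX:ℂ)-pY)) (β*(pZ:ℂ))
      _ = g * t + b * pZ := by
          rw [norm_mul, norm_mul, show ((pX:ℂ)-pY) = (((pX-pY : ℝ)):ℂ) by push_cast; ring,
            Complex.norm_real, Complex.norm_real, Real.norm_eq_abs, Real.norm_eq_abs, abs_of_pos hpZ]
  have habs10 : ‖β*((pX:ℂ)-pY) - γ*(pZ:ℂ)‖ ≤ b * t + g * pZ := by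
    calc ‖β*((pX:ℂ)-pY) - γ*(pZ:ℂ)‖
        ≤ ‖β*((pX:ℂ)-pY)‖ + ‖γ*(pZ:ℂ)‖ := by
          simpa using norm_sub_le (β*((pX:ℂ)-pY)) (γ*(pZ:ℂ))
      _ = b * t + g * pZ := by
          rw [norm_mul, norm_mul, show ((pX:ℂ)-pY) = (((pX-pY : ℝ)):ℂ) by push_cast; ring,
            Complex.norm_real, Complex.norm_real, Real.norm_eq_abs, Real.norm_eq_abs, abs_of_pos hpZ]
  have e01 : Complex.normSq (γ*((pX:ℂ)-pY) - β*(pZ:ℂ)) ≤ (g * t + b * pZ)^2 := by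
    rw [Complex.normSq_eq_norm_sq]
    exact pow_le_pow_left₀ (norm_nonneg _) habs01 2
  have e10 : Complex.normSq (β*((pX:ℂ)-pY) - γ*(pZ:ℂ)) ≤ (b * t + g * pZ)^2 := by
    rw [Complex.normSq_eq_norm_sq]
    exact pow_le_pow_left₀ (norm_nonneg _) habs10 2
  -- the two traces
  unfold frobNorm
  rw [frob_sq_s12, frob_sq_s12]
  have hF : Complex.normSq (!![α,β;γ,-α] 0 0) + Complex.normSq (!![α,β;γ,-α] 0 1)
      + Complex.normSq (!![α,β;γ,-α] 1 0) + Complex.normSq (!![α,β;γ,-α] 1 1)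
      = 2*a^2 + b^2 + g^2 := by
    simp [Complex.normSq_eq_norm_sq]
    ring
  rw [hF]
  set S := !![α*((pZ:ℂ)-pX-pY), γ*((pX:ℂ)-pY) - β*(pZ:ℂ);
       β*((pX:ℂ)-pY) - γ*(pZ:ℂ), -(α*((pZ:ℂ)-pX-pY))] with hS
  have hE : Complex.normSq (S 0 0) + Complex.normSq (S 0 1)
      + Complex.normSq (S 1 0) + Complex.normSq (S 1 1)
      ≤ q^2 * (2*a^2 + b^2 + g^2) := by
    have hS00 : S 0 0 = α*((pZ:ℂ)-pX-pY) := by simp [hS]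
    have hS01 : S 0 1 = γ*((pX:ℂ)-pY) - β*(pZ:ℂ) := by simp [hS]
    have hS10 : S 1 0 = β*((pX:ℂ)-pY) - γ*(pZ:ℂ) := by simp [hS]
    have hS11 : S 1 1 = -(α*((pZ:ℂ)-pX-pY)) := by simp [hS]
    rw [hS00, hS01, hS10, hS11, Complex.normSq_neg, e00]
    have key := real_ineq q t pZ a b g (pZ - pX - pY) hq0 ht0 hpZ.le hT hD
      (norm_nonneg β) (norm_nonneg γ)
    calc a ^ 2 * (pZ - pX - pY) ^ 2 + Complex.normSq (γ*((pX:ℂ)-pY) - β*(pZ:ℂ))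
          + Complex.normSq (β*((pX:ℂ)-pY) - γ*(pZ:ℂ)) + a ^ 2 * (pZ - pX - pY) ^ 2
        ≤ 2*a^2*(pZ-pX-pY)^2 + (g*t + b*pZ)^2 + (b*t + g*pZ)^2 := by linarith [e01, e10]
      _ ≤ q^2 * (2*a^2 + b^2 + g^2) := key
  calc Real.sqrt (Complex.normSq (S 0 0) + Complex.normSq (S 0 1)
        + Complex.normSq (S 1 0) + Complex.normSq (S 1 1))
      ≤ Real.sqrt (q^2 * (2*a^2 + b^2 + g^2)) := Real.sqrt_le_sqrt hE
    _ = q * Real.sqrt (2*a^2 + b^2 + g^2) := by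
        rw [Real.sqrt_mul (sq_nonneg q), Real.sqrt_sq hq0]

/-- **Frobenius contraction of unital primitive qubit noise on traceless
matrices.** For every traceless `2×2` matrix `M`,
`‖N(M)‖_F ≤ (1 - min(p_X, p_Y, p_Z))·‖M‖_F`. -/
theorem frobenius_contraction_unital_primitive_noise
    (U V : Matrix (Fin 2) (Fin 2) ℂ)
    (hU : U ∈ Matrix.unitaryGroup (Fin 2) ℂ) (hV : V ∈ Matrix.unitaryGroup (Fin 2) ℂ)
    (pX pY pZ : ℝ)
    (hpX : pX ∈ Set.Ioo (0 : ℝ) 1) (hpY : pY ∈ Set.Ioo (0 : ℝ) 1)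
    (hpZ : pZ ∈ Set.Ioo (0 : ℝ) 1) (hp : pX + pY + pZ < 1)
    (M : Matrix (Fin 2) (Fin 2) ℂ) (hM : M.trace = 0) :
    frobNorm (chanN U V pX pY pZ M) ≤ (1 - min pX (min pY pZ)) * frobNorm M := by
  obtain ⟨hpX0, hpX1⟩ := hpX
  obtain ⟨hpY0, hpY1⟩ := hpY
  obtain ⟨hpZ0, hpZ1⟩ := hpZ
  have hmX : min pX (min pY pZ) ≤ pX := min_le_left _ _
  have hmY : min pX (min pY pZ) ≤ pY := le_trans (min_le_right _ _) (min_le_left _ _)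
  have hmZ : min pX (min pY pZ) ≤ pZ := le_trans (min_le_right _ _) (min_le_right _ _)
  have hm0 : 0 < min pX (min pY pZ) := lt_min hpX0 (lt_min hpY0 hpZ0)
  -- the conjugated matrix A = U M Uᴴ is traceless
  have hAtr : (U * M * Uᴴ).trace = 0 := by
    have hU1 : Uᴴ * U = 1 := mem_unitaryGroup_iff'.mp hU
    rw [Matrix.trace_mul_cycle, hU1,
      Matrix.one_mul, hM]
  have h11 : (U * M * Uᴴ) 1 1 = -((U * M * Uᴴ) 0 0) := by
    have h := Matrix.trace_fin_two (U * M * Uᴴ)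
    rw [hAtr] at h
    linear_combination -h
  have hAeta : U * M * Uᴴ
      = !![(U * M * Uᴴ) 0 0, (U * M * Uᴴ) 0 1; (U * M * Uᴴ) 1 0, -((U * M * Uᴴ) 0 0)] := by
    rw [← h11]
    exact Matrix.eta_fin_two _
  have hAfrob : frobNorm (U * M * Uᴴ) = frobNorm M := frob_conj hU M
  -- split the channel with the triangle inequality
  have hsplit : frobNorm (chanN U V pX pY pZ M)
      ≤ frobNorm ((1 - ((pX : ℂ) + pY + pZ)) • M)
        + frobNorm (V * ((pX : ℂ) • (pauliX * (U * M * Uᴴ) * pauliX)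
         + (pY : ℂ) • (pauliY * (U * M * Uᴴ) * pauliY)
         + (pZ : ℂ) • (pauliZ * (U * M * Uᴴ) * pauliZ)) * Vᴴ) := frob_add_le _ _
  have h1 : frobNorm ((1 - ((pX : ℂ) + pY + pZ)) • M) = (1 - (pX + pY + pZ)) * frobNorm M := by
    rw [frob_smul, show (1 - ((pX : ℂ) + pY + pZ)) = (((1 - (pX + pY + pZ) : ℝ)) : ℂ) by
      push_cast; ring, Complex.norm_real, Real.norm_eq_abs, abs_of_pos (by linarith)]
  have h2 : frobNorm (V * ((pX : ℂ) • (pauliX * (U * M * Uᴴ) * pauliX)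
         + (pY : ℂ) • (pauliY * (U * M * Uᴴ) * pauliY)
         + (pZ : ℂ) • (pauliZ * (U * M * Uᴴ) * pauliZ)) * Vᴴ)
      ≤ (pX + pY + pZ - min pX (min pY pZ)) * frobNorm M := by
    rw [frob_conj hV]
    calc frobNorm ((pX : ℂ) • (pauliX * (U * M * Uᴴ) * pauliX)
         + (pY : ℂ) • (pauliY * (U * M * Uᴴ) * pauliY)
         + (pZ : ℂ) • (pauliZ * (U * M * Uᴴ) * pauliZ))
        ≤ (pX + pY + pZ - min pX (min pY pZ)) * frobNorm (U * M * Uᴴ) := by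
          rw [hAeta]
          exact key_bound pX pY pZ hpX0 hpY0 hpZ0 _ _ _
      _ = (pX + pY + pZ - min pX (min pY pZ)) * frobNorm M := by rw [hAfrob]
  have hM0 : 0 ≤ frobNorm M := Real.sqrt_nonneg _
  calc frobNorm (chanN U V pX pY pZ M)
      ≤ (1 - (pX + pY + pZ)) * frobNorm M
        + (pX + pY + pZ - min pX (min pY pZ)) * frobNorm M := by
        rw [← h1]; exact le_trans hsplit (by linarith [h2])
    _ = (1 - min pX (min pY pZ)) * frobNorm M := by ring
end

section
/- (Decomposition of full-Kraus-rank channels.) Let L_1, …, L_{d²} be a linearly independent family of d×d complex matrices with Σ_{i=1}^{d²} L_i† L_i = I, and let τ be a positive definite d×d complex matrix with Tr(τ) = 1 satisfying Σ_{i=1}^{d²} L_i τ L_i† = τ. Then there exist q ∈ (0,1) and d×d complex matrices M_1, …, M_{d²} such that: (i) Σ_{j} M_j† M_j = I; (ii) for every d×d complex matrix X, Σ_{i} L_i X L_i† = (1−q) Σ_{j} M_j X M_j† + q·Tr(X)·τ; and (iii) Σ_{j} M_j τ M_j† = τ. -/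
open Matrix
open scoped ComplexOrder

section SqrtShim

open scoped MatrixOrder

noncomputable def Matrix.PosSemidef.sqrt {n : Type*} [Fintype n] [DecidableEq n]
    {A : Matrix n n ℂ} (_h : A.PosSemidef) : Matrix n n ℂ :=
  CFC.sqrt A

lemma Matrix.PosSemidef.posSemidef_sqrt {n : Type*} [Fintype n] [DecidableEq n]
    {A : Matrix n n ℂ} (h : A.PosSemidef) : h.sqrt.PosSemidef :=
  Matrix.nonneg_iff_posSemidef.mp (CFC.sqrt_nonneg A)

lemma Matrix.PosSemidef.sqrt_mul_self {n : Type*} [Fintype n] [DecidableEq n]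
    {A : Matrix n n ℂ} (h : A.PosSemidef) : h.sqrt * h.sqrt = A :=
  CFC.sqrt_mul_sqrt_self A (Matrix.nonneg_iff_posSemidef.mpr h)

lemma Matrix.posSemidef_iff_eq_transpose_mul_self {n : Type*} [Fintype n] [DecidableEq n]
    {A : Matrix n n ℂ} : A.PosSemidef ↔ ∃ B : Matrix n n ℂ, A = Bᴴ * B := by
  constructor
  · intro h
    obtain ⟨b, hb⟩ := CStarAlgebra.nonneg_iff_eq_star_mul_self.mp
      (Matrix.nonneg_iff_posSemidef.mpr h)
    exact ⟨b, hb⟩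
  · rintro ⟨B, rfl⟩
    exact Matrix.posSemidef_conjTranspose_mul_self B

end SqrtShim

namespace KrausAux

variable {d : ℕ}

/-- The Choi matrix of the channel `X ↦ ∑ i, K i * X * (K i)ᴴ`. -/
noncomputable def kChoi {ι : Type*} [Fintype ι] (K : ι → Matrix (Fin d) (Fin d) ℂ) :
    Matrix (Fin d × Fin d) (Fin d × Fin d) ℂ :=
  ∑ i, Matrix.of fun p q => K i p.1 p.2 * star (K i q.1 q.2)

lemma kChoi_apply {ι : Type*} [Fintype ι] (K : ι → Matrix (Fin d) (Fin d) ℂ) (p q) :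
    kChoi K p q = ∑ i, K i p.1 p.2 * star (K i q.1 q.2) := by
  simp [kChoi, Matrix.sum_apply]

/-- The channel associated to a Choi matrix. -/
noncomputable def chanOf (C : Matrix (Fin d × Fin d) (Fin d × Fin d) ℂ)
    (X : Matrix (Fin d) (Fin d) ℂ) : Matrix (Fin d) (Fin d) ℂ :=
  Matrix.of fun p q => ∑ rs : Fin d × Fin d, C (p, rs.1) (q, rs.2) * X rs.1 rs.2

lemma chanOf_kChoi {ι : Type*} [Fintype ι] (K : ι → Matrix (Fin d) (Fin d) ℂ)
    (X : Matrix (Fin d) (Fin d) ℂ) :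
    chanOf (kChoi K) X = ∑ i, K i * X * (K i)ᴴ := by
  ext p q
  simp only [chanOf, Matrix.of_apply, kChoi_apply, Matrix.sum_apply, Matrix.mul_apply,
    Matrix.conjTranspose_apply, Finset.sum_mul, Finset.mul_sum]
  rw [Finset.sum_comm]
  refine Finset.sum_congr rfl fun i _ => ?_
  rw [Fintype.sum_prod_type]
  rw [Finset.sum_comm]
  refine Finset.sum_congr rfl fun s _ => Finset.sum_congr rfl fun r _ => ?_
  ring

lemma chanOf_add (C D : Matrix (Fin d × Fin d) (Fin d × Fin d) ℂ) (X) :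
    chanOf (C + D) X = chanOf C X + chanOf D X := by
  ext p q
  simp [chanOf, add_mul, Finset.sum_add_distrib]

lemma chanOf_smul (c : ℂ) (C : Matrix (Fin d × Fin d) (Fin d × Fin d) ℂ) (X) :
    chanOf (c • C) X = c • chanOf C X := by
  ext p q
  simp [chanOf, Finset.mul_sum, mul_assoc]

/-- conjugated partial trace -/
noncomputable def ptrS (C : Matrix (Fin d × Fin d) (Fin d × Fin d) ℂ) :
    Matrix (Fin d) (Fin d) ℂ :=
  Matrix.of fun r s => ∑ p, star (C (p, r) (p, s))

lemma ptrS_kChoi {ι : Type*} [Fintype ι] (K : ι → Matrix (Fin d) (Fin d) ℂ) :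
    ptrS (kChoi K) = ∑ i, (K i)ᴴ * K i := by
  ext r s
  simp only [ptrS, Matrix.of_apply, kChoi_apply, Matrix.sum_apply, Matrix.mul_apply,
    Matrix.conjTranspose_apply, star_sum, star_mul', star_star, mul_comm]
  exact Finset.sum_comm

lemma ptrS_add (C D : Matrix (Fin d × Fin d) (Fin d × Fin d) ℂ) :
    ptrS (C + D) = ptrS C + ptrS D := by
  ext r s
  simp [ptrS, Finset.sum_add_distrib]

lemma ptrS_real_smul (c : ℝ) (C : Matrix (Fin d × Fin d) (Fin d × Fin d) ℂ) :
    ptrS ((c : ℂ) • C) = (c : ℂ) • ptrS C := by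
  ext r s
  simp [ptrS, Finset.mul_sum, Complex.star_def, Complex.conj_ofReal]


lemma dot_kChoi {ι : Type*} [Fintype ι] (K : ι → Matrix (Fin d) (Fin d) ℂ)
    (x : Fin d × Fin d → ℂ) :
    star x ⬝ᵥ (kChoi K).mulVec x
      = ∑ i, (∑ p, star (x p) * K i p.1 p.2) * star (∑ p, star (x p) * K i p.1 p.2) := by
  simp only [dotProduct, Matrix.mulVec, Pi.star_apply, kChoi_apply, dotProduct,
    Finset.sum_mul, Finset.mul_sum, star_sum, star_mul', star_star]
  calc (∑ p : Fin d × Fin d, ∑ q : Fin d × Fin d, ∑ i : ι,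
          star (x p) * (K i p.1 p.2 * star (K i q.1 q.2) * x q))
      = ∑ p : Fin d × Fin d, ∑ i : ι, ∑ q : Fin d × Fin d,
          star (x p) * (K i p.1 p.2 * star (K i q.1 q.2) * x q) :=
        Finset.sum_congr rfl fun p _ => Finset.sum_comm
    _ = ∑ i : ι, ∑ p : Fin d × Fin d, ∑ q : Fin d × Fin d,
          star (x p) * (K i p.1 p.2 * star (K i q.1 q.2) * x q) := Finset.sum_comm
    _ = _ := Finset.sum_congr rfl fun i _ => Finset.sum_comm.trans <|
          Finset.sum_congr rfl fun p _ => Finset.sum_congr rfl fun q _ => by ring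

lemma kChoi_isHermitian {ι : Type*} [Fintype ι] (K : ι → Matrix (Fin d) (Fin d) ℂ) :
    (kChoi K).IsHermitian := by
  ext p q
  simp only [Matrix.conjTranspose_apply, kChoi_apply, star_sum, star_mul', star_star]
  exact Finset.sum_congr rfl fun i _ => mul_comm _ _

lemma kChoi_posSemidef {ι : Type*} [Fintype ι] (K : ι → Matrix (Fin d) (Fin d) ℂ) :
    (kChoi K).PosSemidef := by
  refine Matrix.PosSemidef.of_dotProduct_mulVec_nonneg (kChoi_isHermitian K) fun x => ?_
  rw [dot_kChoi]
  refine Finset.sum_nonneg fun i _ => ?_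
  rw [Complex.star_def, Complex.mul_conj]
  exact_mod_cast Complex.normSq_nonneg _

lemma kChoi_posDef (L : Fin (d ^ 2) → Matrix (Fin d) (Fin d) ℂ)
    (hL : LinearIndependent ℂ L) : (kChoi L).PosDef := by
  refine Matrix.posDef_iff_dotProduct_mulVec.mpr ⟨kChoi_isHermitian L, fun x hx => ?_⟩
  rw [dot_kChoi]
  -- the linear functional Y ↦ ∑ p, star (x p) * Y p.1 p.2
  set φ : Matrix (Fin d) (Fin d) ℂ →ₗ[ℂ] ℂ :=
    { toFun := fun Y => ∑ p : Fin d × Fin d, star (x p) * Y p.1 p.2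
      map_add' := by intro Y Z; simp [mul_add, Finset.sum_add_distrib]
      map_smul' := by
        intro c Y
        simp only [Matrix.smul_apply, smul_eq_mul, RingHom.id_apply, Finset.mul_sum]
        exact Finset.sum_congr rfl fun p _ => by ring } with hφ
  have hspan : Submodule.span ℂ (Set.range L) = ⊤ := by
    refine hL.span_eq_top_of_card_eq_finrank' ?_
    simp [Module.finrank_matrix, pow_two]
  by_cases hall : ∀ i, φ (L i) = 0
  · exfalso
    have hzero : ∀ Y : Matrix (Fin d) (Fin d) ℂ, φ Y = 0 := by
      intro Y
      have hY : Y ∈ Submodule.span ℂ (Set.range L) := by rw [hspan]; trivial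
      induction hY using Submodule.span_induction with
      | mem y hy => obtain ⟨i, rfl⟩ := hy; exact hall i
      | zero => simp
      | add y z _ _ hy hz => rw [map_add, hy, hz, add_zero]
      | smul c y _ hy => rw [LinearMap.map_smul, hy, smul_zero]
    have := hzero (Matrix.of fun r s => x (r, s))
    simp only [hφ, LinearMap.coe_mk, AddHom.coe_mk, Matrix.of_apply] at this
    apply hx
    have h2 : star x ⬝ᵥ x = 0 := by
      rw [← this]; exact Finset.sum_congr rfl fun p _ => by rfl
    exact dotProduct_star_self_eq_zero.mp h2
  · push_neg at hall
    obtain ⟨j, hj⟩ := hall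
    refine Finset.sum_pos' (fun i _ => ?_) ⟨j, Finset.mem_univ j, ?_⟩
    · rw [Complex.star_def, Complex.mul_conj]
      exact_mod_cast Complex.normSq_nonneg _
    · have : φ (L j) = ∑ p : Fin d × Fin d, star (x p) * L j p.1 p.2 := rfl
      rw [Complex.star_def, Complex.mul_conj]
      have h3 : (∑ p : Fin d × Fin d, star (x p) * L j p.1 p.2) ≠ 0 := by
        intro h; exact hj (by rw [this, h])
      exact_mod_cast Complex.normSq_pos.mpr h3


lemma dot_self_eq (E : Matrix m' m' ℂ) (x : m' → ℂ) [Fintype m'] :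
    star x ⬝ᵥ (Eᴴ * E).mulVec x = ((∑ i, Complex.normSq ((E.mulVec x) i) : ℝ) : ℂ) := by
  rw [← Matrix.mulVec_mulVec, Matrix.dotProduct_mulVec, ← Matrix.star_mulVec]
  simp only [dotProduct, Pi.star_apply]
  push_cast
  refine Finset.sum_congr rfl fun i _ => ?_
  rw [Complex.star_def, mul_comm, Complex.mul_conj]

lemma normSq_mulVec_le (E : Matrix m' m' ℂ) (x : m' → ℂ) [Fintype m'] :
    ∑ i, Complex.normSq ((E.mulVec x) i)
      ≤ (∑ i, ∑ j, Complex.normSq (E i j)) * ∑ j, Complex.normSq (x j) := by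
  rw [Finset.sum_mul]
  refine Finset.sum_le_sum fun i _ => ?_
  have h1 : ‖(E.mulVec x) i‖ ≤ ∑ j, ‖E i j‖ * ‖x j‖ := by
    simp only [Matrix.mulVec, dotProduct]
    calc ‖∑ j, E i j * x j‖ ≤ ∑ j, ‖E i j * x j‖ :=
          norm_sum_le _ _
      _ = _ := Finset.sum_congr rfl fun j _ => norm_mul _ _
  have h2 : (∑ j, ‖E i j‖ * ‖x j‖) ^ 2
      ≤ (∑ j, ‖E i j‖ ^ 2) * ∑ j, ‖x j‖ ^ 2 :=
    Finset.sum_mul_sq_le_sq_mul_sq _ _ _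
  calc Complex.normSq ((E.mulVec x) i) = ‖(E.mulVec x) i‖ ^ 2 :=
        (Complex.sq_norm _).symm
    _ ≤ (∑ j, ‖E i j‖ * ‖x j‖) ^ 2 := by
        have := norm_nonneg ((E.mulVec x) i)
        nlinarith [h1]
    _ ≤ (∑ j, ‖E i j‖ ^ 2) * ∑ j, ‖x j‖ ^ 2 := h2
    _ = (∑ j, Complex.normSq (E i j)) * ∑ j, Complex.normSq (x j) := by
        simp [Complex.sq_norm]

lemma exists_q {n' : Type*} [Fintype n'] [DecidableEq n'] {A B : Matrix n' n' ℂ}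
    (hA : A.PosDef) (hB : B.PosSemidef) :
    ∃ q : ℝ, 0 < q ∧ q < 1 ∧ (A - (q : ℂ) • B).PosSemidef := by
  classical
  set S := hA.posSemidef.sqrt with hSdef
  have hS : S.PosSemidef := hA.posSemidef.posSemidef_sqrt
  have hSS : S * S = A := hA.posSemidef.sqrt_mul_self
  have hdet : IsUnit S.det := by
    have hdA : A.det ≠ 0 := ne_of_gt hA.det_pos
    have : S.det * S.det = A.det := by rw [← Matrix.det_mul, hSS]
    exact isUnit_iff_ne_zero.mpr fun h => hdA (by rw [← this, h, zero_mul])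
  have hSH : Sᴴ = S := hS.1
  have hSinvH : (S⁻¹)ᴴ = S⁻¹ := by rw [Matrix.conjTranspose_nonsing_inv, hSH]
  set C := S⁻¹ * B * S⁻¹ with hCdef
  have hC : C.PosSemidef := by
    have := hB.conjTranspose_mul_mul_same (S⁻¹)
    rwa [hSinvH] at this
  obtain ⟨E, hE⟩ := Matrix.posSemidef_iff_eq_transpose_mul_self.mp hC
  set t := ∑ i, ∑ j, Complex.normSq (E i j) with htdef
  have ht0 : 0 ≤ t := Finset.sum_nonneg fun i _ =>
    Finset.sum_nonneg fun j _ => Complex.normSq_nonneg _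
  refine ⟨1 / (t + 2), by positivity, ?_, ?_⟩
  · rw [div_lt_one (by linarith)]; linarith
  -- key: 1 - q • C is psd
  have hkey : ((1 : Matrix n' n' ℂ) - ((1 / (t + 2) : ℝ) : ℂ) • C).PosSemidef := by
    refine Matrix.PosSemidef.of_dotProduct_mulVec_nonneg ?_ ?_
    · have hCH : Cᴴ = C := hC.1
      show _ᴴ = _
      rw [Matrix.conjTranspose_sub, Matrix.conjTranspose_smul, hCH, Matrix.conjTranspose_one,
        Complex.star_def, Complex.conj_ofReal]
    · intro x
      rw [Matrix.sub_mulVec, dotProduct_sub, Matrix.one_mulVec,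
        Matrix.smul_mulVec, dotProduct_smul, hE, dot_self_eq]
      have hxx : star x ⬝ᵥ x = ((∑ j, Complex.normSq (x j) : ℝ) : ℂ) := by
        simp only [dotProduct, Pi.star_apply]
        push_cast
        exact Finset.sum_congr rfl fun j _ => by rw [Complex.star_def, mul_comm, Complex.mul_conj]
      rw [hxx, smul_eq_mul, ← Complex.ofReal_mul, ← Complex.ofReal_sub]
      rw [Complex.zero_le_real]
      have hb := normSq_mulVec_le E x
      have hx0 : 0 ≤ ∑ j, Complex.normSq (x j) :=
        Finset.sum_nonneg fun j _ => Complex.normSq_nonneg _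
      have : (1 / (t + 2)) * (∑ i, Complex.normSq ((E.mulVec x) i))
          ≤ (1 / (t + 2)) * (t * ∑ j, Complex.normSq (x j)) := by
        apply mul_le_mul_of_nonneg_left hb (by positivity)
      have h2 : (1 / (t + 2)) * (t * ∑ j, Complex.normSq (x j))
          ≤ ∑ j, Complex.normSq (x j) := by
        rw [div_mul_eq_mul_div, one_mul, div_le_iff₀ (by linarith)]
        nlinarith
      linarith
  have hfact : A - ((1 / (t + 2) : ℝ) : ℂ) • B
      = Sᴴ * ((1 : Matrix n' n' ℂ) - ((1 / (t + 2) : ℝ) : ℂ) • C) * S := by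
    rw [hSH, Matrix.mul_sub, Matrix.sub_mul, mul_one, hSS, hCdef]
    congr 1
    rw [Matrix.mul_smul, Matrix.smul_mul]
    congr 1
    rw [← Matrix.mul_assoc, ← Matrix.mul_assoc, Matrix.mul_nonsing_inv _ hdet, Matrix.one_mul,
      Matrix.mul_assoc, Matrix.nonsing_inv_mul _ hdet, Matrix.mul_one]
  rw [hfact]
  exact hkey.conjTranspose_mul_mul_same S


section Repl

variable (τ : Matrix (Fin d) (Fin d) ℂ) (hτ : τ.PosDef)

/-- Kraus operators of the replacement channel `X ↦ Tr(X) • τ`. -/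
noncomputable def repl (k : Fin d × Fin d) : Matrix (Fin d) (Fin d) ℂ :=
  hτ.posSemidef.sqrt * Matrix.single k.1 k.2 (1 : ℂ)

lemma repl_apply (k : Fin d × Fin d) (p r : Fin d) :
    repl τ hτ k p r = if k.2 = r then hτ.posSemidef.sqrt p k.1 else 0 := by
  simp [repl, Matrix.mul_apply, Matrix.single_apply, ite_and, mul_ite,
    Finset.sum_ite_eq, eq_comm]

lemma repl_trace_aux (hτtr : τ.trace = 1) :
    ∑ a, ∑ p, star (hτ.posSemidef.sqrt p a) * hτ.posSemidef.sqrt p a = 1 := by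
  set s := hτ.posSemidef.sqrt with hsdef
  have hsH : sᴴ = s := hτ.posSemidef.posSemidef_sqrt.1
  have hss : s * s = τ := hτ.posSemidef.sqrt_mul_self
  have h1 : (sᴴ * s).trace = 1 := by rw [hsH, hss, hτtr]
  rw [← h1]
  simp only [Matrix.trace, Matrix.diag_apply, Matrix.mul_apply, Matrix.conjTranspose_apply]

lemma repl_sum (hτtr : τ.trace = 1) :
    ∑ k : Fin d × Fin d, (repl τ hτ k)ᴴ * repl τ hτ k = 1 := by
  ext r r'
  simp only [Matrix.sum_apply, Matrix.mul_apply, Matrix.conjTranspose_apply, repl_apply,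
    apply_ite star, star_zero, ite_mul, zero_mul, mul_ite, mul_zero]
  rw [Fintype.sum_prod_type]
  by_cases h : r = r'
  · subst h
    simp only [Matrix.one_apply_eq]
    rw [← repl_trace_aux τ hτ hτtr]
    refine Finset.sum_congr rfl fun a _ => ?_
    rw [Finset.sum_comm]
    simp
  · rw [Matrix.one_apply_ne h]
    refine Finset.sum_eq_zero fun a _ => Finset.sum_eq_zero fun b _ =>
      Finset.sum_eq_zero fun p _ => ?_
    by_cases hb : b = r <;> by_cases hb' : b = r' <;> simp_all

lemma repl_chan (X : Matrix (Fin d) (Fin d) ℂ) :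
    ∑ k : Fin d × Fin d, repl τ hτ k * X * (repl τ hτ k)ᴴ = X.trace • τ := by
  set s := hτ.posSemidef.sqrt with hsdef
  have hsH : sᴴ = s := hτ.posSemidef.posSemidef_sqrt.1
  have hss : s * s = τ := hτ.posSemidef.sqrt_mul_self
  ext p q
  have hterm : ∀ k : Fin d × Fin d,
      (repl τ hτ k * X * (repl τ hτ k)ᴴ) p q = s p k.1 * X k.2 k.2 * star (s q k.1) := by
    intro k
    simp only [Matrix.mul_apply, Matrix.conjTranspose_apply, repl_apply,
      apply_ite star, star_zero, ite_mul, zero_mul, mul_ite, mul_zero,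
      Finset.sum_ite_eq, Finset.mem_univ, if_true]
    rfl
  rw [Matrix.sum_apply]
  simp only [hterm]
  rw [Fintype.sum_prod_type]
  have : ∀ a, ∑ b, s p a * X b b * star (s q a) = s p a * star (s q a) * X.trace := by
    intro a
    rw [Matrix.trace]
    simp only [Matrix.diag_apply, Finset.mul_sum]
    exact Finset.sum_congr rfl fun b _ => by ring
  simp only [this]
  have hssH : (s * sᴴ) p q = τ p q := by rw [hsH, hss]
  rw [Matrix.smul_apply]
  rw [← hssH]
  simp only [Matrix.mul_apply, Matrix.conjTranspose_apply, Finset.sum_mul, smul_eq_mul]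
  rw [Finset.mul_sum]
  exact Finset.sum_congr rfl fun a _ => by ring

end Repl

lemma posSemidef_real_smul {n' : Type*} [Fintype n'] {r : ℝ} (hr : 0 ≤ r)
    {P : Matrix n' n' ℂ} (hP : P.PosSemidef) : (((r : ℂ)) • P).PosSemidef := by
  refine Matrix.PosSemidef.of_dotProduct_mulVec_nonneg ?_ ?_
  · show _ᴴ = _
    rw [Matrix.conjTranspose_smul, hP.1, Complex.star_def, Complex.conj_ofReal]
  · intro x
    rw [Matrix.smul_mulVec, dotProduct_smul, smul_eq_mul]
    have h := hP.dotProduct_mulVec_nonneg x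
    rw [Complex.le_def] at h ⊢
    simp only [Complex.zero_re, Complex.zero_im] at h ⊢
    constructor
    · simp only [Complex.mul_re, Complex.ofReal_re, Complex.ofReal_im, zero_mul, sub_zero]
      exact mul_nonneg hr h.1
    · simp only [Complex.mul_im, Complex.ofReal_re, Complex.ofReal_im, zero_mul, add_zero]
      rw [← h.2]; ring

end KrausAux

open KrausAux

/-- **decomposition of full-Kraus-rank channels.** Let `L_1,…,L_{d²}` be
linearly independent Kraus operators with `∑ L_i† L_i = I`, and let `τ` be a positive
definite density matrix fixed by the channel `X ↦ ∑ L_i X L_i†`. Then there exist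
`q ∈ (0,1)` and Kraus operators `M_1,…,M_{d²}` with `∑ M_j† M_j = I` such that
`∑ L_i X L_i† = (1-q)·∑ M_j X M_j† + q·Tr(X)·τ` for every `X`, and `∑ M_j τ M_j† = τ`. -/
theorem full_kraus_rank_channel_decomposition
    (d : ℕ) (L : Fin (d ^ 2) → Matrix (Fin d) (Fin d) ℂ)
    (hL : LinearIndependent ℂ L)
    (hsum : ∑ i, (L i)ᴴ * L i = 1)
    (τ : Matrix (Fin d) (Fin d) ℂ) (hτ : τ.PosDef) (hτtr : τ.trace = 1)
    (hfix : ∑ i, L i * τ * (L i)ᴴ = τ) :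
    ∃ q : ℝ, 0 < q ∧ q < 1 ∧
      ∃ M : Fin (d ^ 2) → Matrix (Fin d) (Fin d) ℂ,
        (∑ j, (M j)ᴴ * M j = 1) ∧
        (∀ X : Matrix (Fin d) (Fin d) ℂ,
          ∑ i, L i * X * (L i)ᴴ
            = (1 - (q : ℂ)) • (∑ j, M j * X * (M j)ᴴ) + ((q : ℂ) * X.trace) • τ) ∧
        (∑ j, M j * τ * (M j)ᴴ = τ) := by
  classical
  set A := kChoi L with hAdef
  have hA : A.PosDef := kChoi_posDef L hL
  set B := kChoi (repl τ hτ) with hBdef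
  have hB : B.PosSemidef := kChoi_posSemidef _
  obtain ⟨q, hq0, hq1, hP⟩ := exists_q hA hB
  have h1q : (0:ℝ) < 1 - q := by linarith
  have h1qC : ((1 - q : ℝ) : ℂ) ≠ 0 := by
    exact_mod_cast ne_of_gt h1q
  set Cm := (((1 - q)⁻¹ : ℝ) : ℂ) • (A - (q : ℂ) • B) with hCmdef
  have hCm : Cm.PosSemidef := posSemidef_real_smul (by positivity) hP
  obtain ⟨N, hN⟩ := Matrix.posSemidef_iff_eq_transpose_mul_self.mp hCm
  set e : Fin (d ^ 2) ≃ Fin d × Fin d :=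
    (finCongr (pow_two d)).trans finProdFinEquiv.symm with hedef
  set M : Fin (d ^ 2) → Matrix (Fin d) (Fin d) ℂ :=
    fun j => Matrix.of fun p r => star (N (e j) (p, r)) with hMdef
  have hMchoi : kChoi M = Cm := by
    rw [hN]
    ext p q
    rw [kChoi_apply]
    have : ∀ j, M j p.1 p.2 * star (M j q.1 q.2) = star (N (e j) p) * N (e j) q := by
      intro j
      simp [hMdef, Prod.mk.eta]
    simp only [this]
    rw [Matrix.mul_apply]
    simp only [Matrix.conjTranspose_apply]
    exact Equiv.sum_comp e fun k => star (N k p) * N k q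
  have hAdecomp : A = ((1 - q : ℝ) : ℂ) • kChoi M + ((q : ℝ) : ℂ) • B := by
    rw [hMchoi, hCmdef, smul_smul, ← Complex.ofReal_mul, mul_inv_cancel₀ (ne_of_gt h1q),
      Complex.ofReal_one, one_smul]
    abel
  have hchan : ∀ X : Matrix (Fin d) (Fin d) ℂ,
      ∑ i, L i * X * (L i)ᴴ
        = (1 - (q : ℂ)) • (∑ j, M j * X * (M j)ᴴ) + ((q : ℂ) * X.trace) • τ := by
    intro X
    have h1 : ∑ i, L i * X * (L i)ᴴ = chanOf A X := (chanOf_kChoi L X).symm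
    rw [h1, hAdecomp, chanOf_add, chanOf_smul, chanOf_smul, chanOf_kChoi, chanOf_kChoi,
      repl_chan τ hτ X]
    push_cast
    rw [smul_smul]
  refine ⟨q, hq0, hq1, M, ?_, hchan, ?_⟩
  · -- trace preservation
    have h1 : ptrS A = ((1 - q : ℝ) : ℂ) • ptrS (kChoi M) + ((q : ℝ) : ℂ) • ptrS B := by
      rw [hAdecomp, ptrS_add, ptrS_real_smul, ptrS_real_smul]
    simp only [hAdef, hBdef, ptrS_kChoi] at h1
    rw [hsum, repl_sum τ hτ hτtr] at h1
    have hone : ((1 - q : ℝ) : ℂ) • (1 : Matrix (Fin d) (Fin d) ℂ)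
        = 1 - ((q : ℝ) : ℂ) • 1 := by
      push_cast
      rw [sub_smul, one_smul]
    have h2 : ((1 - q : ℝ) : ℂ) • (∑ j, (M j)ᴴ * M j)
        = ((1 - q : ℝ) : ℂ) • (1 : Matrix (Fin d) (Fin d) ℂ) := by
      rw [hone, eq_sub_iff_add_eq, ← h1]
    exact smul_right_injective _ h1qC h2
  · -- fixed point
    have h2 := hchan τ
    rw [hfix, hτtr, mul_one] at h2
    have h3 : (1 - (q : ℂ)) • (∑ j, M j * τ * (M j)ᴴ) = (1 - (q : ℂ)) • τ := by
      rw [eq_comm, ← eq_sub_iff_add_eq] at h2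
      rw [h2, sub_smul, one_smul]
    have h4 : (1 - (q : ℂ)) ≠ 0 := by
      rw [show (1 - (q : ℂ)) = ((1 - q : ℝ) : ℂ) by push_cast; ring]
      exact h1qC
    exact smul_right_injective _ h4 h3
end

section
/- (Quantum Gibbs variational principle used for the information-content dual.) Let H be a Hermitian n×n complex matrix and let λ > 0. Then the infimum over all density matrices ρ on ℂ^n of Tr(Hρ) − λ·S(ρ) equals −λ·log Tr(exp(−H/λ)), where S(ρ) = −Tr(ρ log ρ) is the von Neumann entropy and exp denotes the matrix exponential; the infimum is attained at the Gibbs state ρ = exp(−H/λ)/Tr(exp(−H/λ)). -/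
open Matrix
open scoped ComplexOrder

/-- The von Neumann entropy `S(ρ) = -∑ λᵢ log λᵢ` (natural logarithm) of a Hermitian
matrix, computed from its eigenvalues. -/
noncomputable def vnEntropy {n : Type*} [Fintype n] [DecidableEq n]
    {A : Matrix n n ℂ} (hA : A.IsHermitian) : ℝ :=
  -∑ i, hA.eigenvalues i * Real.log (hA.eigenvalues i)

/-- The (unnormalized) Gibbs matrix `exp(-H/λ)`, via the matrix exponential. -/
noncomputable def gibbsExp (n : ℕ) (H : Matrix (Fin n) (Fin n) ℂ) (lam : ℝ) :
    Matrix (Fin n) (Fin n) ℂ :=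
  NormedSpace.exp ((-(1 / lam) : ℂ) • H)

section Aux

open Polynomial

lemma charpoly_unitary_conj {n : ℕ} (A U : Matrix (Fin n) (Fin n) ℂ)
    (hU : U ∈ Matrix.unitaryGroup (Fin n) ℂ) :
    (U * A * Uᴴ).charpoly = A.charpoly := by
  have h2 : U * Uᴴ = 1 := by
    simpa [Matrix.star_eq_conjTranspose] using Matrix.mem_unitaryGroup_iff.mp hU
  set f := RingHom.mapMatrix (m := Fin n) (C : ℂ →+* ℂ[X]) with hf
  have hcomm : ∀ B : Matrix (Fin n) (Fin n) ℂ[X],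
      Commute (Matrix.scalar (Fin n) (X : ℂ[X])) B :=
    fun B => Matrix.scalar_commute _ (fun r' => Commute.all _ _) _
  have key : charmatrix (U * A * Uᴴ) = f U * charmatrix A * f Uᴴ := by
    rw [charmatrix, charmatrix, _root_.map_mul f, _root_.map_mul f]
    rw [mul_sub, sub_mul]
    congr 1
    rw [← (hcomm (f U)).eq, mul_assoc, ← _root_.map_mul f, h2, _root_.map_one f, mul_one]
  have hdet : (f U).det * (f Uᴴ).det = 1 := by
    rw [← det_mul, ← _root_.map_mul f, h2, _root_.map_one f, det_one]
  rw [Matrix.charpoly, Matrix.charpoly, key, det_mul, det_mul]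
  rw [mul_comm ((f U).det * A.charmatrix.det) ((f Uᴴ).det), ← mul_assoc,
    mul_comm ((f Uᴴ).det) ((f U).det), hdet, one_mul]

lemma charpoly_conj_diag {n : ℕ} {A : Matrix (Fin n) (Fin n) ℂ}
    (U : Matrix (Fin n) (Fin n) ℂ) (hU : U ∈ Matrix.unitaryGroup (Fin n) ℂ)
    (d : Fin n → ℝ) (hAd : A = U * Matrix.diagonal (fun i => (d i : ℂ)) * Uᴴ) :
    A.charpoly = ∏ i, (X - C ((d i : ℂ))) := by
  rw [hAd, charpoly_unitary_conj _ _ hU]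
  rw [Matrix.charpoly_of_upperTriangular _ (Matrix.blockTriangular_diagonal _)]
  simp

lemma eig_multiset {n : ℕ} {A : Matrix (Fin n) (Fin n) ℂ} (hA : A.IsHermitian)
    (U : Matrix (Fin n) (Fin n) ℂ) (hU : U ∈ Matrix.unitaryGroup (Fin n) ℂ)
    (d : Fin n → ℝ) (hAd : A = U * Matrix.diagonal (fun i => (d i : ℂ)) * Uᴴ)
    (g : ℝ → ℝ) : ∑ i, g (hA.eigenvalues i) = ∑ i, g (d i) := by
  have hspec : A = (hA.eigenvectorUnitary : Matrix (Fin n) (Fin n) ℂ) *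
      Matrix.diagonal (fun i => ((hA.eigenvalues i : ℝ) : ℂ)) *
      (hA.eigenvectorUnitary : Matrix (Fin n) (Fin n) ℂ)ᴴ := by
    simpa [Matrix.star_eq_conjTranspose, Function.comp_def] using hA.spectral_theorem
  have h1 := charpoly_conj_diag _ hA.eigenvectorUnitary.2 _ hspec
  have h2 := charpoly_conj_diag U hU d hAd
  have hr : ∀ c : Fin n → ℝ, (∏ i, (X - C ((c i : ℂ)))).roots
      = Finset.univ.val.map (fun i => ((c i : ℝ) : ℂ)) := by
    intro c
    have : (∏ i, (X - C ((c i : ℂ)))) =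
        ((Finset.univ.val.map (fun i => ((c i : ℝ) : ℂ))).map (fun a => X - C a)).prod := by
      rw [Multiset.map_map]; rfl
    rw [this, Polynomial.roots_multiset_prod_X_sub_C]
  have hms : Finset.univ.val.map (fun i => ((hA.eigenvalues i : ℝ) : ℂ))
      = Finset.univ.val.map (fun i => ((d i : ℝ) : ℂ)) := by
    rw [← hr, ← hr, ← h1, ← h2]
  have h3 := congrArg (Multiset.map (fun z : ℂ => g z.re)) hms
  rw [Multiset.map_map, Multiset.map_map] at h3
  have h4 := congrArg Multiset.sum h3
  rw [Finset.sum_eq_multiset_sum, Finset.sum_eq_multiset_sum]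
  simpa [Function.comp] using h4

lemma unitary_conj_exp {n : ℕ} (U : Matrix (Fin n) (Fin n) ℂ)
    (hU : U ∈ Matrix.unitaryGroup (Fin n) ℂ) (D : Matrix (Fin n) (Fin n) ℂ) :
    NormedSpace.exp (U * D * Uᴴ) = U * NormedSpace.exp D * Uᴴ := by
  have h1 : Uᴴ * U = 1 := by
    simpa [Matrix.star_eq_conjTranspose] using Matrix.mem_unitaryGroup_iff'.mp hU
  have h2 : U * Uᴴ = 1 := by
    simpa [Matrix.star_eq_conjTranspose] using Matrix.mem_unitaryGroup_iff.mp hU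
  have hunit : IsUnit U := ⟨⟨U, Uᴴ, h2, h1⟩, rfl⟩
  have hinv : U⁻¹ = Uᴴ := Matrix.inv_eq_left_inv h1
  rw [← hinv, Matrix.exp_conj U D hunit]

lemma exp_diag_complex {n : ℕ} (v : Fin n → ℝ) :
    NormedSpace.exp (Matrix.diagonal (fun i => (v i : ℂ)))
      = Matrix.diagonal (fun i => ((Real.exp (v i) : ℝ) : ℂ)) := by
  rw [Matrix.exp_diagonal]
  funext i
  rw [Pi.exp_def]
  rw [← Complex.exp_eq_exp_ℂ]
  simp [Complex.ofReal_exp]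

lemma gibbs_decomp {n : ℕ} (H : Matrix (Fin n) (Fin n) ℂ) (hH : H.IsHermitian)
    (lam : ℝ) :
    gibbsExp n H lam = (hH.eigenvectorUnitary : Matrix (Fin n) (Fin n) ℂ) *
      Matrix.diagonal (fun i => ((Real.exp (-(1/lam) * hH.eigenvalues i) : ℝ) : ℂ)) *
      (hH.eigenvectorUnitary : Matrix (Fin n) (Fin n) ℂ)ᴴ := by
  set V := (hH.eigenvectorUnitary : Matrix (Fin n) (Fin n) ℂ)
  set k := hH.eigenvalues with hk
  have hspec : H = V * Matrix.diagonal (fun i => ((k i : ℝ) : ℂ)) * Vᴴ := by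
    simpa [Matrix.star_eq_conjTranspose, Function.comp_def] using hH.spectral_theorem
  have hsmul : (-(1 / lam) : ℂ) • H
      = V * Matrix.diagonal (fun i => ((-(1/lam) * k i : ℝ) : ℂ)) * Vᴴ := by
    rw [hspec, ← Matrix.smul_mul, ← Matrix.mul_smul]
    congr 2
    ext i j
    by_cases h : i = j <;> simp [Matrix.diagonal_apply, h] <;> try (push_cast; ring)
  rw [gibbsExp, hsmul, unitary_conj_exp _ hH.eigenvectorUnitary.2, exp_diag_complex]

lemma trace_unitary_conj {n : ℕ} (U : Matrix (Fin n) (Fin n) ℂ)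
    (hU : U ∈ Matrix.unitaryGroup (Fin n) ℂ) (D : Matrix (Fin n) (Fin n) ℂ) :
    (U * D * Uᴴ).trace = D.trace := by
  have h1 : Uᴴ * U = 1 := by
    simpa [Matrix.star_eq_conjTranspose] using Matrix.mem_unitaryGroup_iff'.mp hU
  rw [Matrix.trace_mul_comm, ← Matrix.mul_assoc, h1, Matrix.one_mul]

lemma conj_mul_conj {n : ℕ} (V A B : Matrix (Fin n) (Fin n) ℂ) (hV : Vᴴ * V = 1) :
    (V * A * Vᴴ) * (V * B * Vᴴ) = V * (A * B) * Vᴴ := by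
  simp only [Matrix.mul_assoc]
  rw [← Matrix.mul_assoc Vᴴ V (B * Vᴴ), hV, Matrix.one_mul]

lemma entropy_ineq {p q : ℝ} (hp : 0 ≤ p) (hq : 0 < q) :
    p - q ≤ p * Real.log p - p * Real.log q := by
  rcases eq_or_lt_of_le hp with h | h
  · simp [← h, hq.le]
  · have h1 : 0 < q / p := div_pos hq h
    have h2 := Real.log_le_sub_one_of_pos h1
    rw [Real.log_div hq.ne' h.ne'] at h2
    have h3 := mul_le_mul_of_nonneg_left h2 h.le
    have h4 : p * (q / p - 1) = q - p := by field_simp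
    nlinarith

lemma classical_gibbs {n : ℕ} (p h : Fin n → ℝ) (lam : ℝ) (hlam : 0 < lam)
    (hp0 : ∀ i, 0 ≤ p i) (hp1 : ∑ i, p i = 1) :
    -lam * Real.log (∑ i, Real.exp (-(1/lam) * h i))
      ≤ ∑ i, p i * h i + lam * ∑ i, p i * Real.log (p i) := by
  have hne : Nonempty (Fin n) := by
    by_contra hc
    rw [not_nonempty_iff] at hc
    simp [Finset.univ_eq_empty] at hp1
  set Z := ∑ i, Real.exp (-(1/lam) * h i) with hZ
  have hZpos : 0 < Z := Finset.sum_pos (fun i _ => Real.exp_pos _) Finset.univ_nonempty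
  set q : Fin n → ℝ := fun i => Real.exp (-(1/lam) * h i) / Z with hq
  have hqpos : ∀ i, 0 < q i := fun i => div_pos (Real.exp_pos _) hZpos
  have hq1 : ∑ i, q i = 1 := by
    rw [hq, ← Finset.sum_div, ← hZ, div_self hZpos.ne']
  have hlogq : ∀ i, Real.log (q i) = -(1/lam) * h i - Real.log Z := by
    intro i
    rw [hq, Real.log_div (Real.exp_pos _).ne' hZpos.ne', Real.log_exp]
  have key : ∀ i ∈ Finset.univ, p i - q i ≤ p i * Real.log (p i) - p i * Real.log (q i) :=
    fun i _ => entropy_ineq (hp0 i) (hqpos i)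
  have hsum := Finset.sum_le_sum key
  rw [Finset.sum_sub_distrib, Finset.sum_sub_distrib, hp1, hq1, sub_self] at hsum
  have hlq : ∑ i, p i * Real.log (q i)
      = -(1/lam) * ∑ i, p i * h i - Real.log Z := by
    have h5 : ∀ i, p i * Real.log (q i) = -(1/lam) * (p i * h i) - Real.log Z * p i := by
      intro i; rw [hlogq i]; ring
    rw [Finset.sum_congr rfl (fun i _ => h5 i), Finset.sum_sub_distrib, ← Finset.mul_sum,
      ← Finset.mul_sum, hp1, mul_one]
  rw [hlq] at hsum
  have hfin : 0 ≤ ∑ i, p i * Real.log (p i) + (1/lam) * ∑ i, p i * h i + Real.log Z := by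
    linarith
  have h6 := mul_le_mul_of_nonneg_left hfin hlam.le
  have hl : lam * ((1/lam) * ∑ i, p i * h i) = ∑ i, p i * h i := by
    field_simp
  nlinarith [h6]

lemma jensen_exp {n : ℕ} (w x : Fin n → ℝ) (hw0 : ∀ i, 0 ≤ w i) (hw1 : ∑ i, w i = 1) :
    Real.exp (∑ i, w i * x i) ≤ ∑ i, w i * Real.exp (x i) := by
  have := convexOn_exp.map_sum_le (t := Finset.univ) (w := w) (p := x)
    (fun i _ => hw0 i) hw1 (fun i _ => Set.mem_univ _)
  simpa [smul_eq_mul] using this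

lemma conj_diag_entry {n : ℕ} (W : Matrix (Fin n) (Fin n) ℂ) (d : Fin n → ℝ) (i : Fin n) :
    ((Wᴴ * Matrix.diagonal (fun j => (d j : ℂ)) * W) i i)
      = ((∑ j, Complex.normSq (W j i) * d j : ℝ) : ℂ) := by
  rw [Matrix.mul_apply]
  push_cast
  apply Finset.sum_congr rfl
  intro j _
  rw [Matrix.mul_diagonal, Matrix.conjTranspose_apply, Complex.star_def]
  linear_combination (d j : ℂ) * Complex.mul_conj (W j i)

lemma col_normSq {n : ℕ} (W : Matrix (Fin n) (Fin n) ℂ) (hWW : Wᴴ * W = 1) (i : Fin n) :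
    ∑ j, Complex.normSq (W j i) = 1 := by
  have h := congrFun (congrFun hWW i) i
  rw [Matrix.mul_apply, Matrix.one_apply_eq] at h
  have h2 : (((∑ j, Complex.normSq (W j i) : ℝ)) : ℂ) = ((1 : ℝ) : ℂ) := by
    push_cast
    rw [← h]
    apply Finset.sum_congr rfl
    intro j _
    rw [Matrix.conjTranspose_apply, Complex.star_def]
    linear_combination -Complex.mul_conj (W j i)
  exact_mod_cast h2

lemma row_normSq {n : ℕ} (W : Matrix (Fin n) (Fin n) ℂ) (hWW : W * Wᴴ = 1) (j : Fin n) :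
    ∑ i, Complex.normSq (W j i) = 1 := by
  have h := congrFun (congrFun hWW j) j
  rw [Matrix.mul_apply, Matrix.one_apply_eq] at h
  have h2 : (((∑ i, Complex.normSq (W j i) : ℝ)) : ℂ) = ((1 : ℝ) : ℂ) := by
    push_cast
    rw [← h]
    apply Finset.sum_congr rfl
    intro i _
    rw [Matrix.conjTranspose_apply, Complex.star_def]
    linear_combination -Complex.mul_conj (W j i)
  exact_mod_cast h2

end Aux

/-- **quantum Gibbs variational principle.** For Hermitian `H` and
`λ > 0`, the infimum over density matrices `ρ` of `Tr(Hρ) - λ·S(ρ)` equals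
`-λ·log Tr(exp(-H/λ))` (it is a least element, so the infimum is attained), and it is
attained at the Gibbs state `ρ = exp(-H/λ)/Tr(exp(-H/λ))`. -/
theorem gibbs_variational_principle
    (n : ℕ) (hn : 1 ≤ n)
    (H : Matrix (Fin n) (Fin n) ℂ) (hH : H.IsHermitian)
    (lam : ℝ) (hlam : 0 < lam) :
    IsLeast {x : ℝ | ∃ ρ : Matrix (Fin n) (Fin n) ℂ, ∃ hρ : ρ.PosSemidef,
        ρ.trace = 1 ∧ x = ((H * ρ).trace).re - lam * vnEntropy hρ.1}
      (-lam * Real.log (((gibbsExp n H lam).trace).re)) ∧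
    ∃ hG : (((gibbsExp n H lam).trace)⁻¹ • gibbsExp n H lam).PosSemidef,
      (((gibbsExp n H lam).trace)⁻¹ • gibbsExp n H lam).trace = 1 ∧
      ((H * (((gibbsExp n H lam).trace)⁻¹ • gibbsExp n H lam)).trace).re
          - lam * vnEntropy hG.1
        = -lam * Real.log (((gibbsExp n H lam).trace).re) := by
  have hne : Nonempty (Fin n) := ⟨⟨0, hn⟩⟩
  set V := (hH.eigenvectorUnitary : Matrix (Fin n) (Fin n) ℂ) with hVdef
  have hV : V ∈ Matrix.unitaryGroup (Fin n) ℂ := hH.eigenvectorUnitary.2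
  have hVV : Vᴴ * V = 1 := by
    simpa [Matrix.star_eq_conjTranspose] using Matrix.mem_unitaryGroup_iff'.mp hV
  have hVV' : V * Vᴴ = 1 := by
    simpa [Matrix.star_eq_conjTranspose] using Matrix.mem_unitaryGroup_iff.mp hV
  set k := hH.eigenvalues with hk
  set e : Fin n → ℝ := fun i => Real.exp (-(1/lam) * k i) with he
  have hspec : H = V * Matrix.diagonal (fun i => ((k i : ℝ) : ℂ)) * Vᴴ := by
    simpa [Matrix.star_eq_conjTranspose, Function.comp_def] using hH.spectral_theorem
  have hGd : gibbsExp n H lam = V * Matrix.diagonal (fun i => ((e i : ℝ) : ℂ)) * Vᴴ :=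
    gibbs_decomp H hH lam
  set Z : ℝ := ∑ i, e i with hZ
  have hZpos : 0 < Z := Finset.sum_pos (fun i _ => Real.exp_pos _) Finset.univ_nonempty
  have htrG : (gibbsExp n H lam).trace = (Z : ℂ) := by
    rw [hGd, trace_unitary_conj _ hV, Matrix.trace_diagonal]
    exact_mod_cast hZ.symm
  have htrGre : ((gibbsExp n H lam).trace).re = Z := by rw [htrG]; simp
  -- The Gibbs state
  set σ := ((gibbsExp n H lam).trace)⁻¹ • gibbsExp n H lam with hσ
  have hσd : σ = V * Matrix.diagonal (fun i => ((e i / Z : ℝ) : ℂ)) * Vᴴ := by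
    rw [hσ, htrG, hGd, ← Matrix.smul_mul, ← Matrix.mul_smul]
    congr 2
    ext i j
    by_cases h : i = j <;> simp [Matrix.diagonal_apply, h] <;> try (push_cast; field_simp)
  have hσpsd : σ.PosSemidef := by
    rw [hσd]
    refine Matrix.PosSemidef.mul_mul_conjTranspose_same ?_ V
    refine Matrix.posSemidef_diagonal_iff.mpr fun i => ?_
    have : (0:ℝ) ≤ e i / Z := div_nonneg (Real.exp_pos _).le hZpos.le
    exact_mod_cast this
  have htrσ : σ.trace = 1 := by
    rw [hσ, Matrix.trace_smul, htrG, smul_eq_mul, inv_mul_cancel₀]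
    exact_mod_cast hZpos.ne'
  -- value at the Gibbs state
  set S : ℝ := ∑ i, k i * e i with hS
  have hHσ : (H * σ).trace = ((S / Z : ℝ) : ℂ) := by
    have h1 : H * σ = ((Z)⁻¹ : ℂ) • (V * Matrix.diagonal (fun i => ((k i * e i : ℝ) : ℂ)) * Vᴴ) := by
      rw [hσ, htrG, Matrix.mul_smul]
      congr 1
      rw [hGd]
      nth_rewrite 1 [hspec]
      rw [conj_mul_conj _ _ _ hVV, Matrix.diagonal_mul_diagonal]
      congr 2
      funext i
      push_cast
      ring
    rw [h1, Matrix.trace_smul, trace_unitary_conj _ hV, Matrix.trace_diagonal, smul_eq_mul]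
    have h2 : ∑ x : Fin n, ((k x * e x : ℝ) : ℂ) = ((S : ℝ) : ℂ) := by exact_mod_cast hS.symm
    rw [h2]
    push_cast
    field_simp
  have hEnt : vnEntropy hσpsd.1 = -∑ i, (e i / Z) * Real.log (e i / Z) := by
    rw [vnEntropy]
    congr 1
    exact eig_multiset hσpsd.1 V hV _ hσd (fun x => x * Real.log x)
  have hlogq : ∀ i, Real.log (e i / Z) = -(1/lam) * k i - Real.log Z := by
    intro i
    rw [Real.log_div (Real.exp_pos _).ne' hZpos.ne']
    simp [Real.log_exp]
  have hq1 : ∑ i, e i / Z = 1 := by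
    rw [← Finset.sum_div, ← hZ, div_self hZpos.ne']
  have hsumq : ∑ i, (e i / Z) * Real.log (e i / Z) = -(1/lam) * (S / Z) - Real.log Z := by
    have h5 : ∀ i, (e i / Z) * Real.log (e i / Z)
        = -(1/lam) * ((k i * e i) / Z) - Real.log Z * (e i / Z) := by
      intro i; rw [hlogq i]; ring
    rw [Finset.sum_congr rfl (fun i _ => h5 i), Finset.sum_sub_distrib, ← Finset.mul_sum,
      ← Finset.mul_sum, ← Finset.sum_div, ← Finset.sum_div, ← hS, ← hZ,
      div_self hZpos.ne', mul_one]
  have hval : ((H * σ).trace).re - lam * vnEntropy hσpsd.1 = -lam * Real.log Z := by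
    rw [hHσ, hEnt, hsumq]
    simp only [Complex.ofReal_re]
    field_simp
    ring
  constructor
  · constructor
    · exact ⟨σ, hσpsd, htrσ, by rw [hval, htrGre]⟩
    · rintro x ⟨ρ, hρ, htrρ, hx⟩
      set P := hρ.1 with hP
      set U := (P.eigenvectorUnitary : Matrix (Fin n) (Fin n) ℂ) with hUdef
      have hU : U ∈ Matrix.unitaryGroup (Fin n) ℂ := P.eigenvectorUnitary.2
      have hUU : Uᴴ * U = 1 := by
        simpa [Matrix.star_eq_conjTranspose] using Matrix.mem_unitaryGroup_iff'.mp hU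
      have hUU' : U * Uᴴ = 1 := by
        simpa [Matrix.star_eq_conjTranspose] using Matrix.mem_unitaryGroup_iff.mp hU
      set p := P.eigenvalues with hp
      have hρd : ρ = U * Matrix.diagonal (fun i => ((p i : ℝ) : ℂ)) * Uᴴ := by
        simpa [Matrix.star_eq_conjTranspose, Function.comp_def] using P.spectral_theorem
      have hp0 : ∀ i, 0 ≤ p i := fun i => hρ.eigenvalues_nonneg i
      have hp1 : ∑ i, p i = 1 := by
        have h1 : ρ.trace = ((∑ i, p i : ℝ) : ℂ) := by
          rw [hρd, trace_unitary_conj _ hU, Matrix.trace_diagonal]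
          push_cast
          rfl
        rw [htrρ] at h1
        exact_mod_cast h1.symm
      -- the change-of-basis unitary
      set W := Vᴴ * U with hW
      have hWH : Wᴴ = Uᴴ * V := by
        rw [hW, Matrix.conjTranspose_mul, Matrix.conjTranspose_conjTranspose]
      have hWW : Wᴴ * W = 1 := by
        rw [hWH, hW, Matrix.mul_assoc, ← Matrix.mul_assoc V Vᴴ U, hVV', Matrix.one_mul, hUU]
      have hWW' : W * Wᴴ = 1 := by
        rw [hWH, hW, Matrix.mul_assoc, ← Matrix.mul_assoc U Uᴴ V, hUU', Matrix.one_mul, hVV]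
      set h : Fin n → ℝ := fun i => ∑ j, Complex.normSq (W j i) * k j with hh
      have hM : Uᴴ * H * U = Wᴴ * Matrix.diagonal (fun j => ((k j : ℝ) : ℂ)) * W := by
        nth_rewrite 1 [hspec]
        rw [hWH, hW]
        simp only [Matrix.mul_assoc]
      have hMentry : ∀ i, (Uᴴ * H * U) i i = ((h i : ℝ) : ℂ) := by
        intro i
        rw [hM, conj_diag_entry]
      have hHU : H = U * (Uᴴ * H * U) * Uᴴ := by
        calc H = (U * Uᴴ) * H * (U * Uᴴ) := by rw [hUU', Matrix.one_mul, Matrix.mul_one]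
          _ = U * (Uᴴ * H * U) * Uᴴ := by simp only [Matrix.mul_assoc]
      have htrHρ : (H * ρ).trace = ((∑ i, p i * h i : ℝ) : ℂ) := by
        nth_rewrite 1 [hHU]
        rw [hρd, conj_mul_conj _ _ _ hUU, trace_unitary_conj _ hU]
        rw [Matrix.trace]
        push_cast
        apply Finset.sum_congr rfl
        intro i _
        rw [Matrix.diag]
        rw [Matrix.mul_diagonal, hMentry i]
        push_cast
        ring
      have hEntρ : vnEntropy hρ.1 = -∑ i, p i * Real.log (p i) := rfl
      -- Peierls–Bogoliubov
      have hPB : ∑ i, Real.exp (-(1/lam) * h i) ≤ Z := by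
        have hje : ∀ i, Real.exp (-(1/lam) * h i) ≤ ∑ j, Complex.normSq (W j i) * e j := by
          intro i
          have h1 : -(1/lam) * h i = ∑ j, Complex.normSq (W j i) * (-(1/lam) * k j) := by
            rw [hh, Finset.mul_sum]
            apply Finset.sum_congr rfl
            intro j _
            ring
          rw [h1, he]
          exact jensen_exp _ _ (fun j => Complex.normSq_nonneg _) (col_normSq W hWW i)
        calc ∑ i, Real.exp (-(1/lam) * h i)
            ≤ ∑ i, ∑ j, Complex.normSq (W j i) * e j :=
              Finset.sum_le_sum (fun i _ => hje i)
          _ = ∑ j, (∑ i, Complex.normSq (W j i)) * e j := by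
              rw [Finset.sum_comm]
              apply Finset.sum_congr rfl
              intro j _
              rw [Finset.sum_mul]
          _ = Z := by
              rw [hZ]
              apply Finset.sum_congr rfl
              intro j _
              rw [row_normSq W hWW' j, one_mul]
      have hZ'pos : 0 < ∑ i, Real.exp (-(1/lam) * h i) :=
        Finset.sum_pos (fun i _ => Real.exp_pos _) Finset.univ_nonempty
      have hlog : Real.log (∑ i, Real.exp (-(1/lam) * h i)) ≤ Real.log Z :=
        Real.log_le_log hZ'pos hPB
      have hCG := classical_gibbs p h lam hlam hp0 hp1
      rw [hx, htrHρ, hEntρ, htrGre]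
      simp only [Complex.ofReal_re]
      have hstep : -lam * Real.log Z ≤ -lam * Real.log (∑ i, Real.exp (-(1/lam) * h i)) := by
        nlinarith
      calc -lam * Real.log Z ≤ -lam * Real.log (∑ i, Real.exp (-(1/lam) * h i)) := hstep
        _ ≤ ∑ i, p i * h i + lam * ∑ i, p i * Real.log (p i) := hCG
        _ = ∑ i, p i * h i - lam * -∑ i, p i * Real.log (p i) := by ring
  · exact ⟨hσpsd, htrσ, by rw [hval, htrGre]⟩
end
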